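/- Let y be a word of length n, and suppose x (|x| = m ≥ 2) is a minimal absent word of y. If j is the starting position of an occurrence of x[0..m-2] in y and k is the starting position of an occurrence of x[1..m-1] in y, then the longest common prefix of the suffixes y[j+1..n-1] and y[k..n-1] has length exactly m-2 (i.e., it equals x[1..m-2]). -/

import Mathlib

/-- `x` is a factor (contiguous subword) of `y` iff `x <:+: y` (`List.IsInfix`).
A minimal absent word of `y`: a word of length at least 2 that is not a factor
of `y` but all of whose proper factors are factors of `y`. -/
def MinimalAbsentWord {α : Type*} (y x : List α) : Prop :=
  2 ≤ x.length ∧ ¬ x <:+: y ∧ ∀ f : List α, f <:+: x → f ≠ x → f <:+: y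

/-- The length of the longest common prefix of two words. -/
def lcpLen {α : Type*} [DecidableEq α] : List α → List α → ℕ
  | a :: s, b :: t => if a = b then lcpLen s t + 1 else 0
  | _, _ => 0

theorem lcpLen_ge {α : Type*} [DecidableEq α] (p : List α) :
    ∀ s t : List α, p <+: s → p <+: t → p.length ≤ lcpLen s t := by
  induction p with
  | nil => intro s t _ _; simp
  | cons a p ih =>
    intro s t hs ht
    obtain ⟨u, rfl⟩ := hs
    obtain ⟨v, rfl⟩ := ht
    simpa [lcpLen] using ih (p ++ u) (p ++ v) ⟨u, rfl⟩ ⟨v, rfl⟩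

theorem lcpLen_take {α : Type*} [DecidableEq α] :
    ∀ (n : ℕ) (s t : List α), n ≤ lcpLen s t → s.take n = t.take n := by
  intro n
  induction n with
  | zero => simp
  | succ n ih =>
    intro s t h
    match s, t with
    | [], t => simp [lcpLen] at h
    | a :: s, [] => simp [lcpLen] at h
    | a :: s, b :: t =>
      by_cases hab : a = b
      · subst hab
        simp only [lcpLen, if_pos rfl] at h
        simp [ih s t (Nat.succ_le_succ_iff.mp h)]
      · simp [lcpLen, hab] at h

/-- If `x[0..m-2]` occurs at position `j` and `x[1..m-1]` occurs at position `k`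
in `y`, then the lcp of the suffixes `y[j+1..]` and `y[k..]` has length exactly
`m - 2`. An occurrence of a word `w` at position `p` is expressed by
`(y.drop p).take w.length = w`. -/
theorem stmt_13 {α : Type*} [DecidableEq α] (y x : List α)
    (h : MinimalAbsentWord y x) (j k : ℕ)
    (hj : (y.drop j).take (x.length - 1) = x.dropLast)
    (hk : (y.drop k).take (x.length - 1) = x.tail) :
    lcpLen (y.drop (j + 1)) (y.drop k) = x.length - 2 := by
  obtain ⟨hm, habs, -⟩ := h
  obtain ⟨a, b, x', rfl⟩ : ∃ a b x', x = a :: b :: x' := by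
    match x, hm with
    | a :: b :: x', _ => exact ⟨a, b, x', rfl⟩
  simp only [List.length_cons, Nat.add_sub_cancel, List.dropLast_cons₂, List.tail_cons] at *
  -- x = a :: b :: x', x.dropLast = a :: (b::x').dropLast, x.tail = b :: x'
  have h1 : a :: (b :: x').dropLast <+: y.drop j := hj ▸ List.take_prefix _ _
  have h2 : (b :: x') <+: y.drop k := hk ▸ List.take_prefix _ _
  obtain ⟨u, hu⟩ := h1
  have hdj1 : y.drop (j + 1) = (b :: x').dropLast ++ u := by
    have := List.drop_drop (i := 1) (j := j) (l := y)
    rw [← this, ← hu]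
    simp
  -- lower bound
  have hlb : x'.length ≤ lcpLen (y.drop (j + 1)) (y.drop k) := by
    have hq1 : (b :: x').dropLast <+: y.drop (j + 1) := ⟨u, hdj1.symm⟩
    have hq2 : (b :: x').dropLast <+: y.drop k :=
      (List.dropLast_prefix _).trans h2
    have := lcpLen_ge _ _ _ hq1 hq2
    simpa using this
  -- upper bound
  have hub : lcpLen (y.drop (j + 1)) (y.drop k) < x'.length + 1 := by
    by_contra hge
    push_neg at hge
    have heq := lcpLen_take (x'.length + 1) _ _ hge
    have hxt : (b :: x') <+: y.drop (j + 1) := by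
      have : (y.drop (j + 1)).take (x'.length + 1) = b :: x' := by
        rw [heq]
        have : (b :: x').length = x'.length + 1 := by simp
        rw [← this]
        exact List.prefix_iff_eq_take.mp h2 ▸ rfl
      exact this ▸ List.take_prefix _ _
    have hcons : y.drop j = a :: y.drop (j + 1) := by
      rw [hdj1, ← hu]; simp
    have hx : (a :: b :: x') <+: y.drop j := by
      obtain ⟨v, hv⟩ := hxt
      exact ⟨v, by rw [hcons, ← hv]; simp⟩
    exact habs ((hx.isInfix).trans (List.drop_suffix j y).isInfix)
  omega
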